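/- Let N be a finitely generated torsion-free nilpotent group of nilpotency class c and let H be a finite-index subgroup of N. For each i ∈ {1,…,c+1} set N_i = √[N]{γ_i(N)} and H_i = √[H]{γ_i(H)}. Then for every i: (1) H_i = H ∩ N_i; (2) H_i has finite index in N_i; (3) there is a group isomorphism H_i/H_{i+1} ≅ H_i N_{i+1}/N_{i+1} induced by h·H_{i+1} ↦ h·N_{i+1}. -/

import Mathlib

/-- Paper's `N_i = √[N]{γ_i(N)}` (1-indexed): the isolator in `N` of the `i`-th term of the
lower central series of `N`.  (Mathlib's `(⊤ : Subgroup N).lowerCentralSeries (i-1)` is the paper's `γ_i(N)`.) -/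
def isolatorLCS (N : Type*) [Group N] (i : ℕ) : Set N :=
  {x : N | ∃ m : ℕ, 1 ≤ m ∧ x ^ m ∈ (⊤ : Subgroup N).lowerCentralSeries (i - 1)}

/-- Paper's `H_i = √[H]{γ_i(H)}` for a subgroup `H ≤ N`, viewed as a subset of `N`:
the isolator, taken inside `H`, of the `i`-th term of the lower central series of `H`. -/
def isolatorLCSSubgroup {N : Type*} [Group N] (H : Subgroup N) (i : ℕ) : Set N :=
  {x : N | ∃ hx : x ∈ H, ∃ m : ℕ, 1 ≤ m ∧ (⟨x, hx⟩ : H) ^ m ∈ (⊤ : Subgroup H).lowerCentralSeries (i - 1)}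

/-- Old Mathlib's `Monoid.IsTorsionFree` (removed since): no nontrivial element has finite order. -/
def Monoid.IsTorsionFree (G : Type*) [Monoid G] : Prop :=
  ∀ g : G, g ≠ 1 → ¬IsOfFinOrder g

section IsolatorAux
open Subgroup
open scoped commutatorElement

section CommIdent
variable {G : Type*} [Group G]

lemma my_comm_mul_left (a b c : G) : ⁅a * b, c⁆ = a * ⁅b, c⁆ * a⁻¹ * ⁅a, c⁆ := by
  simp only [commutatorElement_def]; group

lemma my_comm_mul_right (a b c : G) : ⁅a, b * c⁆ = ⁅a, b⁆ * (b * ⁅a, c⁆ * b⁻¹) := by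
  simp only [commutatorElement_def]; group

/-- If all commutators with `y` are central, commutators of powers are powers of commutators. -/
lemma my_comm_pow_pow (y g : G) (hy : ∀ b z : G, Commute ⁅y, b⁆ z) (a e : ℕ) :
    ⁅y ^ a, g ^ e⁆ = ⁅y, g⁆ ^ (a * e) := by
  have h1 : ∀ c : G, ∀ a : ℕ, ⁅y ^ a, c⁆ = ⁅y, c⁆ ^ a := by
    intro c a
    induction a with
    | zero => simp
    | succ a ih =>
      rw [pow_succ, my_comm_mul_left, ih, ← (hy c (y ^ a)).eq]
      rw [show ⁅y, c⁆ * y ^ a * (y ^ a)⁻¹ = ⁅y, c⁆ by group, ← pow_succ']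
  have h2 : ∀ e : ℕ, ⁅y, g ^ e⁆ = ⁅y, g⁆ ^ e := by
    intro e
    induction e with
    | zero => simp
    | succ e ih =>
      rw [pow_succ, my_comm_mul_right, ← (hy g (g ^ e)).eq, ih]
      rw [show ⁅y, g⁆ ^ e * (⁅y, g⁆ * g ^ e * (g ^ e)⁻¹) = ⁅y, g⁆ ^ e * ⁅y, g⁆ by group,
        ← pow_succ]
  rw [h1 (g ^ e) a, h2 e, ← pow_mul, Nat.mul_comm e a]
end CommIdent

lemma my_lcs_succ (G : Type*) [Group G] (n : ℕ) :
    (⊤ : Subgroup G).lowerCentralSeries (n + 1) = ⁅(⊤ : Subgroup G).lowerCentralSeries n, (⊤ : Subgroup G)⁆ := rfl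

section Finiteness

universe u

/-- Lower central series maps onto under surjective homs. -/
lemma my_lcs_map_surj {G : Type u} {G' : Type*} [Group G] [Group G'] (f : G →* G')
    (hf : Function.Surjective f) (n : ℕ) :
    ((⊤ : Subgroup G).lowerCentralSeries n).map f = (⊤ : Subgroup G').lowerCentralSeries n := by
  induction n with
  | zero =>
    simp only [Subgroup.lowerCentralSeries_zero]
    rw [← MonoidHom.range_eq_map, MonoidHom.range_eq_top]
    exact hf
  | succ n ih =>
    rw [my_lcs_succ, my_lcs_succ, Subgroup.map_commutator, ih,
      ← MonoidHom.range_eq_map, MonoidHom.range_eq_top.mpr hf]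

/-- A group of nilpotency class ≤ c generated by finitely many torsion elements is finite. -/
theorem my_finite_of_torsion_gens :
    ∀ (c : ℕ) (G : Type u) [Group G], (⊤ : Subgroup G).lowerCentralSeries c = ⊥ →
      ∀ S : Set G, S.Finite → (∀ s ∈ S, IsOfFinOrder s) → Subgroup.closure S = ⊤ →
        Finite G := by
  intro c
  induction c with
  | zero =>
    intro G _ hc S _ _ _
    have h1 : ∀ g : G, g = 1 := fun g => by
      have : g ∈ (⊥ : Subgroup G) := hc ▸ Subgroup.mem_top g
      simpa using this
    haveI : Subsingleton G := ⟨fun a b => by rw [h1 a, h1 b]⟩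
    exact Finite.of_subsingleton
  | succ c ih =>
    intro G _ hc S hSfin hStor hStop
    rcases Nat.eq_zero_or_pos c with rfl | hcpos
    · -- abelian case
      have hcomm : ∀ a b : G, a * b = b * a := by
        intro a b
        have : ⁅a, b⁆ ∈ (⊤ : Subgroup G).lowerCentralSeries 1 := by
          rw [my_lcs_succ]
          exact Subgroup.commutator_mem_commutator (mem_top a) (mem_top b)
        rw [hc] at this
        exact commutatorElement_eq_one_iff_mul_comm.mp (by simpa using this)
      letI : CommGroup G := { (inferInstance : Group G) with mul_comm := hcomm }
      haveI : Group.FG G := Group.fg_iff.mpr ⟨S, hStop, hSfin⟩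
      refine CommGroup.finite_of_fg_torsion G ?_
      intro g
      have hg : g ∈ Subgroup.closure S := hStop ▸ Subgroup.mem_top g
      have : Subgroup.closure S ≤ CommGroup.torsion G :=
        Subgroup.closure_le _ |>.mpr fun s hs => hStor s hs
      exact this hg
    · -- main step
      set K := (⊤ : Subgroup G).lowerCentralSeries c with hK
      have hKcent : K ≤ Subgroup.center G := by
        intro k hk
        rw [Subgroup.mem_center_iff]
        intro g
        have : ⁅k, g⁆ ∈ (⊤ : Subgroup G).lowerCentralSeries (c + 1) := by
          rw [my_lcs_succ]
          exact Subgroup.commutator_mem_commutator hk (mem_top g)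
        rw [hc] at this
        exact (commutatorElement_eq_one_iff_mul_comm.mp (by simpa using this)).symm
      -- the quotient by K
      have hlcsQ : (⊤ : Subgroup (G ⧸ K)).lowerCentralSeries c = ⊥ := by
        rw [← my_lcs_map_surj (QuotientGroup.mk' K) (QuotientGroup.mk'_surjective K) c, ← hK]
        rw [Subgroup.map_eq_bot_iff, QuotientGroup.ker_mk']
      have hQfin : Finite (G ⧸ K) := by
        refine ih (G ⧸ K) hlcsQ ((QuotientGroup.mk' K) '' S) (hSfin.image _) ?_ ?_
        · rintro s ⟨t, ht, rfl⟩
          exact (QuotientGroup.mk' K).isOfFinOrder (hStor t ht)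
        · rw [← Subgroup.map_top_of_surjective _ (QuotientGroup.mk'_surjective K), ← MonoidHom.map_closure,
            hStop]
      -- center has finite quotient
      have hZfin : Finite (G ⧸ Subgroup.center G) := by
        refine Finite.of_surjective
          (QuotientGroup.map K (Subgroup.center G) (MonoidHom.id G) (by simpa using hKcent)) ?_
        intro q
        induction q using QuotientGroup.induction_on with
        | H g => exact ⟨QuotientGroup.mk g, rfl⟩
      -- commutatorSet is finite
      haveI hCSfin : Finite (commutatorSet G) := by
        set Z := Subgroup.center G with hZdef
        have hwd : ∀ (a b a' b' : G), a⁻¹ * a' ∈ Z → b⁻¹ * b' ∈ Z → ⁅a, b⁆ = ⁅a', b'⁆ := by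
          intro a b a' b' hz hw
          have ha' : a' = a * (a⁻¹ * a') := by group
          have hb' : b' = b * (b⁻¹ * b') := by group
          rw [ha', hb', my_comm_mul_left,
            commutatorElement_eq_one_iff_mul_comm.mpr
              ((Subgroup.mem_center_iff.mp hz (b * (b⁻¹ * b'))).symm),
            my_comm_mul_right,
            commutatorElement_eq_one_iff_mul_comm.mpr
              (Subgroup.mem_center_iff.mp hw a)]
          group
        let f : (G ⧸ Z) → (G ⧸ Z) → G := fun a b =>
          Quotient.liftOn₂' a b (fun x y => ⁅x, y⁆) (by
            intro a₁ b₁ a₂ b₂ ha hb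
            exact hwd a₁ b₁ a₂ b₂
              (QuotientGroup.leftRel_apply.mp ha) (QuotientGroup.leftRel_apply.mp hb))
        have hsub : commutatorSet G ⊆ Set.range (fun p : (G ⧸ Z) × (G ⧸ Z) => f p.1 p.2) := by
          rintro x ⟨g₁, g₂, rfl⟩
          exact ⟨(QuotientGroup.mk g₁, QuotientGroup.mk g₂), rfl⟩
        exact (Set.finite_range _ |>.subset hsub).to_subtype
      haveI : Finite (_root_.commutator G) := inferInstance
      have hKle : K ≤ _root_.commutator G := by
        rw [← Subgroup.top_lowerCentralSeries_one]
        exact Subgroup.lowerCentralSeries_antitone _ hcpos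
      haveI : Finite K :=
        Finite.of_injective (Subgroup.inclusion hKle) (Subgroup.inclusion_injective hKle)
      exact Finite.of_equiv _ (Subgroup.groupEquivQuotientProdSubgroup (s := K)).symm

end Finiteness

section Torsion

variable {G : Type*} [Group G]

/-- In a nilpotent group, the product of two torsion elements is torsion. -/
theorem my_isOfFinOrder_mul [Group.IsNilpotent G] {x y : G}
    (hx : IsOfFinOrder x) (hy : IsOfFinOrder y) : IsOfFinOrder (x * y) := by
  obtain ⟨c, hc⟩ := Subgroup.nilpotent_iff_lowerCentralSeries.mp ‹Group.IsNilpotent G›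
  set H := Subgroup.closure ({x, y} : Set G) with hHdef
  have hxH : x ∈ H := Subgroup.subset_closure (by simp)
  have hyH : y ∈ H := Subgroup.subset_closure (by simp)
  haveI : Finite H := by
    refine my_finite_of_torsion_gens c H ?_ (H.subtype ⁻¹' {x, y}) ?_ ?_
      (Subgroup.closure_preimage_eq_top ({x, y} : Set G))
    · have h1 : ((⊤ : Subgroup H).lowerCentralSeries c).map H.subtype ≤ ⊥ := by
        rw [← hc]; exact Subgroup.lowerCentralSeries_map_subtype_le H c
      exact (Subgroup.map_eq_bot_iff_of_injective ((⊤ : Subgroup (↥H)).lowerCentralSeries c)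
        H.subtype_injective).mp (le_bot_iff.mp h1)
    · exact Set.Finite.preimage Set.injOn_subtype_val ((Set.finite_singleton y).insert x)
    · rintro s hs
      have : (s : G) = x ∨ (s : G) = y := by simpa using hs
      have hfin : IsOfFinOrder (s : G) := by rcases this with h | h <;> rw [h] <;> assumption
      obtain ⟨n, hn, hsn⟩ := isOfFinOrder_iff_pow_eq_one.mp hfin
      refine isOfFinOrder_iff_pow_eq_one.mpr ⟨n, hn, ?_⟩
      ext
      push_cast
      exact hsn
  have : IsOfFinOrder (⟨x * y, H.mul_mem hxH hyH⟩ : H) := isOfFinOrder_of_finite _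
  obtain ⟨n, hn, hpow⟩ := isOfFinOrder_iff_pow_eq_one.mp this
  refine isOfFinOrder_iff_pow_eq_one.mpr ⟨n, hn, ?_⟩
  have := congrArg (H.subtype) hpow
  push_cast at this
  exact this

/-- The isolator of a normal subgroup of a nilpotent group. -/
def Subgroup.myIsolator [Group.IsNilpotent G] (K : Subgroup G) [K.Normal] : Subgroup G where
  carrier := {x | ∃ m : ℕ, 1 ≤ m ∧ x ^ m ∈ K}
  one_mem' := ⟨1, le_rfl, by simpa using K.one_mem⟩
  inv_mem' := by
    rintro x ⟨m, h1, hm⟩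
    exact ⟨m, h1, by rw [inv_pow]; exact K.inv_mem hm⟩
  mul_mem' := by
    rintro x y ⟨a, ha, hxa⟩ ⟨b, hb, hyb⟩
    have tor : ∀ z : G, ∀ n : ℕ, 1 ≤ n → z ^ n ∈ K →
        IsOfFinOrder (QuotientGroup.mk' K z) := by
      intro z n hn hzn
      refine isOfFinOrder_iff_pow_eq_one.mpr ⟨n, hn, ?_⟩
      rw [← map_pow]
      exact (QuotientGroup.eq_one_iff _).mpr hzn
    have := my_isOfFinOrder_mul (tor x a ha hxa) (tor y b hb hyb)
    rw [← map_mul] at this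
    obtain ⟨n, hn, hpow⟩ := isOfFinOrder_iff_pow_eq_one.mp this
    rw [← map_pow] at hpow
    exact ⟨n, hn, (QuotientGroup.eq_one_iff _).mp hpow⟩

theorem Subgroup.le_myIsolator [Group.IsNilpotent G] (K : Subgroup G) [K.Normal] :
    K ≤ K.myIsolator := fun x hx => ⟨1, le_rfl, by simpa using hx⟩

theorem Subgroup.myIsolator_root [Group.IsNilpotent G] {K : Subgroup G} [K.Normal]
    {x : G} {m : ℕ} (hm : 1 ≤ m) (h : x ^ m ∈ K.myIsolator) : x ∈ K.myIsolator := by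
  obtain ⟨n, hn, hpow⟩ := h
  exact ⟨m * n, le_trans hm (Nat.le_mul_of_pos_right m hn), by rwa [pow_mul]⟩

end Torsion

section Engine

variable {N : Type*} [Group N]

/-- The image in `N` of the lower central series of a normal subgroup is normal in `N`. -/
instance my_lcs_map_normal (H : Subgroup N) [H.Normal] (n : ℕ) :
    (((⊤ : Subgroup H).lowerCentralSeries n).map H.subtype).Normal := by
  constructor
  intro x hx g
  obtain ⟨h, hh, rfl⟩ := hx
  have hmem : (MulAut.conjNormal g).toMonoidHom h ∈ (⊤ : Subgroup H).lowerCentralSeries n :=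
    Subgroup.lowerCentralSeries.map (MulAut.conjNormal g).toMonoidHom n
      (Subgroup.mem_map_of_mem _ hh)
  exact ⟨_, hmem, by simpa using MulAut.conjNormal_apply g h⟩

/-- Key engine: each term of the lower central series of `N` lies in the isolator of the
image of the corresponding term for a normal finite-index subgroup. -/
theorem my_lcs_le_isolator [Group.IsNilpotent N] (H0 : Subgroup N) [H0.Normal]
    [H0.FiniteIndex] (n : ℕ) :
    (⊤ : Subgroup N).lowerCentralSeries n ≤ (((⊤ : Subgroup H0).lowerCentralSeries n).map H0.subtype).myIsolator := by
  induction n with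
  | zero =>
    intro x _
    refine ⟨H0.index, Nat.one_le_iff_ne_zero.mpr Subgroup.FiniteIndex.index_ne_zero, ?_⟩
    simp only [Subgroup.lowerCentralSeries_zero]
    rw [← MonoidHom.range_eq_map, Subgroup.range_subtype]
    exact H0.pow_index_mem x
  | succ n ih =>
    obtain ⟨B, hB⟩ := Subgroup.nilpotent_iff_lowerCentralSeries.mp ‹Group.IsNilpotent N›
    set Γ := ((⊤ : Subgroup H0).lowerCentralSeries (n + 1)).map H0.subtype with hΓ
    have key : ∀ k j, B ≤ j + k → n + 1 ≤ j →
        (⊤ : Subgroup N).lowerCentralSeries j ≤ Γ.myIsolator := by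
      intro k
      induction k with
      | zero =>
        intro j hj _
        calc (⊤ : Subgroup N).lowerCentralSeries j ≤ (⊤ : Subgroup N).lowerCentralSeries B :=
              Subgroup.lowerCentralSeries_antitone _ (by omega)
        _ = ⊥ := hB
        _ ≤ _ := bot_le
      | succ k ihk =>
        intro j hjk hj
        rcases le_or_gt B (j + k) with hle | hlt
        · exact ihk j hle hj
        · match j, hj with
          | (j' + 1), hj =>
            rw [my_lcs_succ]
            refine Subgroup.commutator_le.mpr ?_
            intro y hy g _
            -- y ∈ lcs N j' with j' ≥ n
            have hyn : y ∈ (⊤ : Subgroup N).lowerCentralSeries n :=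
              Subgroup.lowerCentralSeries_antitone _ (by omega) hy
            obtain ⟨a, ha, hya⟩ := ih hyn
            have he : 1 ≤ H0.index := Nat.one_le_iff_ne_zero.mpr
              Subgroup.FiniteIndex.index_ne_zero
            have hge : g ^ H0.index ∈ H0 := H0.pow_index_mem g
            -- the commutator of the powers is in Γ
            have hcom : ⁅y ^ a, g ^ H0.index⁆ ∈ Γ := by
              have h2 : g ^ H0.index ∈ (⊤ : Subgroup H0).map H0.subtype := by
                rwa [← MonoidHom.range_eq_map, Subgroup.range_subtype]
              have h3 := Subgroup.commutator_mem_commutator hya h2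
              rwa [← Subgroup.map_commutator, ← my_lcs_succ] at h3
            -- commutators with y are central modulo `(⊤ : Subgroup N).lowerCentralSeries (j' + 2)`
            have hcent : ∀ b z : N, ⁅⁅y, b⁆, z⁆ ∈ (⊤ : Subgroup N).lowerCentralSeries (j' + 2) := by
              intro b z
              have h1 : ⁅y, b⁆ ∈ (⊤ : Subgroup N).lowerCentralSeries (j' + 1) := by
                rw [my_lcs_succ]
                exact Subgroup.commutator_mem_commutator hy (Subgroup.mem_top b)
              rw [my_lcs_succ]
              exact Subgroup.commutator_mem_commutator h1 (Subgroup.mem_top z)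
            -- hence ⁅y,g⁆^(a*e) agrees with ⁅y^a, g^e⁆ modulo lcs N (j'+2)
            have hw : ⁅y, g⁆ ^ (a * H0.index) * ⁅y ^ a, g ^ H0.index⁆⁻¹ ∈
                (⊤ : Subgroup N).lowerCentralSeries (j' + 2) := by
              set π := QuotientGroup.mk' ((⊤ : Subgroup N).lowerCentralSeries (j' + 2)) with hπ
              have hyq : ∀ b z : N ⧸ (⊤ : Subgroup N).lowerCentralSeries (j' + 2),
                  Commute ⁅π y, b⁆ z := by
                intro b z
                obtain ⟨b, rfl⟩ := QuotientGroup.mk'_surjective _ b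
                obtain ⟨z, rfl⟩ := QuotientGroup.mk'_surjective _ z
                rw [← commutatorElement_eq_one_iff_commute, ← map_commutatorElement,
                  ← map_commutatorElement]
                exact (QuotientGroup.eq_one_iff _).mpr (hcent b z)
              have hce := my_comm_pow_pow (π y) (π g) hyq a H0.index
              rw [← map_pow, ← map_pow, ← map_commutatorElement, ← map_commutatorElement,
                ← map_pow] at hce
              refine (QuotientGroup.eq_one_iff _).mp ?_
              show π (⁅y, g⁆ ^ (a * H0.index) * ⁅y ^ a, g ^ H0.index⁆⁻¹) = 1
              rw [map_mul, map_inv, ← hce, mul_inv_cancel]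
            -- conclude
            have hfin : ⁅y, g⁆ ^ (a * H0.index) ∈ Γ.myIsolator := by
              have h5 : ⁅y, g⁆ ^ (a * H0.index) =
                  (⁅y, g⁆ ^ (a * H0.index) * ⁅y ^ a, g ^ H0.index⁆⁻¹) *
                    ⁅y ^ a, g ^ H0.index⁆ := by group
              rw [h5]
              exact Subgroup.mul_mem _ (ihk (j' + 2) (by omega) (by omega) hw)
                (Subgroup.le_myIsolator Γ hcom)
            exact Subgroup.myIsolator_root (Nat.one_le_iff_ne_zero.mpr (Nat.mul_ne_zero (by omega) (by omega))) hfin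
    exact key B (n + 1) (by omega) le_rfl

end Engine

section Transfer

variable {N : Type*} [Group N]

/-- If `x ∈ H` has a power in `γ_n(N)`, then some power of `x` is in `γ_n(H)`. -/
theorem my_exists_pow_mem_lcs [Group.IsNilpotent N] (H : Subgroup N) [H.FiniteIndex]
    (n : ℕ) {x : N} (hxH : x ∈ H) {m : ℕ} (hm : 1 ≤ m)
    (hx : x ^ m ∈ (⊤ : Subgroup N).lowerCentralSeries n) :
    ∃ k : ℕ, 1 ≤ k ∧ (⟨x, hxH⟩ : H) ^ k ∈ (⊤ : Subgroup H).lowerCentralSeries n := by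
  set H0 := H.normalCore with hH0
  obtain ⟨t, ht, hxt⟩ := my_lcs_le_isolator H0 n hx
  rw [← pow_mul] at hxt
  obtain ⟨h0, hh0, hcoe⟩ := hxt
  refine ⟨m * t, Nat.one_le_iff_ne_zero.mpr (Nat.mul_ne_zero (by omega) (by omega)), ?_⟩
  have hincl : (Subgroup.inclusion H.normalCore_le) h0 ∈ (⊤ : Subgroup H).lowerCentralSeries n :=
    Subgroup.lowerCentralSeries.map (Subgroup.inclusion H.normalCore_le) n
      (Subgroup.mem_map_of_mem _ hh0)
  have heq : (⟨x, hxH⟩ : H) ^ (m * t) = (Subgroup.inclusion H.normalCore_le) h0 := by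
    ext
    push_cast
    rw [Subgroup.coe_inclusion, ← hcoe]
    rfl
  rwa [heq]

end Transfer

end IsolatorAux

/-- Lemma 4.2 of the paper.
Let `N` be a finitely generated torsion-free nilpotent group of nilpotency class `c` and `H`
a finite-index subgroup.  With `N_i = √[N]{γ_i(N)}` and `H_i = √[H]{γ_i(H)}` (for
`1 ≤ i ≤ c+1`): (1) `H_i = H ∩ N_i`; (2) `H_i ≤_f N_i`; (3) there is a group isomorphism
`H_i/H_{i+1} ≅ H_i N_{i+1}/N_{i+1}` induced by `h·H_{i+1} ↦ h·N_{i+1}`. -/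
theorem isolator_intersection_finiteIndex_iso
    {N : Type*} [Group N] [Group.IsNilpotent N]
    (hfg : Group.FG N) (htf : Monoid.IsTorsionFree N)
    (c : ℕ) (hc : Group.nilpotencyClass N = c)
    (H : Subgroup N) [H.FiniteIndex]
    (Ni Hi : ℕ → Subgroup N)
    (hNi : ∀ j, (Ni j : Set N) = isolatorLCS N j)
    (hHi : ∀ j, (Hi j : Set N) = isolatorLCSSubgroup H j)
    [∀ j, (Ni j).Normal] [∀ j, ((Hi (j + 1)).subgroupOf (Hi j)).Normal]
    (i : ℕ) (h1 : 1 ≤ i) (h2 : i ≤ c + 1) :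
    (Hi i : Set N) = (H : Set N) ∩ (Ni i : Set N) ∧
    (Hi i ≤ Ni i ∧ ((Hi i).subgroupOf (Ni i)).FiniteIndex) ∧
    ∃ e : (↥(Hi i) ⧸ (Hi (i + 1)).subgroupOf (Hi i)) ≃*
        ↥((Hi i).map (QuotientGroup.mk' (Ni (i + 1)))),
      ∀ x : ↥(Hi i),
        ((e (QuotientGroup.mk x) : ↥((Hi i).map (QuotientGroup.mk' (Ni (i + 1))))) : N ⧸ Ni (i + 1))
          = QuotientGroup.mk (x : N) := by
  -- membership unfoldings
  have memNi : ∀ j (x : N), x ∈ Ni j ↔ ∃ m : ℕ, 1 ≤ m ∧ x ^ m ∈ (⊤ : Subgroup N).lowerCentralSeries (j - 1) := by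
    intro j x
    rw [← SetLike.mem_coe, hNi j]
    exact Iff.rfl
  have memHi : ∀ j (x : N), x ∈ Hi j ↔
      ∃ hx : x ∈ H, ∃ m : ℕ, 1 ≤ m ∧ (⟨x, hx⟩ : H) ^ m ∈ (⊤ : Subgroup H).lowerCentralSeries (j - 1) := by
    intro j x
    rw [← SetLike.mem_coe, hHi j]
    exact Iff.rfl
  -- part 1, for every index
  have part1 : ∀ j (x : N), x ∈ Hi j ↔ x ∈ H ∧ x ∈ Ni j := by
    intro j x
    constructor
    · rintro hx
      obtain ⟨hxH, m, hm, hpow⟩ := (memHi j x).mp hx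
      refine ⟨hxH, (memNi j x).mpr ⟨m, hm, ?_⟩⟩
      have := Subgroup.lowerCentralSeries_map_subtype_le H (j - 1) (Subgroup.mem_map_of_mem H.subtype hpow)
      simpa using this
    · rintro ⟨hxH, hxN⟩
      obtain ⟨m, hm, hpow⟩ := (memNi j x).mp hxN
      obtain ⟨k, hk, hmem⟩ := my_exists_pow_mem_lcs H (j - 1) hxH hm hpow
      exact (memHi j x).mpr ⟨hxH, k, hk, hmem⟩
  have part1set : ∀ j, (Hi j : Set N) = (H : Set N) ∩ (Ni j : Set N) := by
    intro j
    ext x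
    simpa using part1 j x
  have hHiH : ∀ j (x : N), x ∈ Hi j → x ∈ H := fun j x hx => ((part1 j x).mp hx).1
  refine ⟨part1set i, ⟨?_, ?_⟩, ?_⟩
  · exact fun x hx => ((part1 i x).mp hx).2
  · have hEq : (Hi i).subgroupOf (Ni i) = H.subgroupOf (Ni i) := by
      ext x
      simp only [Subgroup.mem_subgroupOf]
      rw [part1 i]
      exact ⟨fun h => h.1, fun h => ⟨h, x.2⟩⟩
    rw [hEq]
    infer_instance
  · -- part 3
    haveI : (Ni (i + 1)).Normal := ‹∀ j, (Ni j).Normal› (i + 1)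
    set φ : ↥(Hi i) →* N ⧸ Ni (i + 1) :=
      (QuotientGroup.mk' (Ni (i + 1))).comp (Hi i).subtype with hφ
    have hker : φ.ker = (Hi (i + 1)).subgroupOf (Hi i) := by
      ext x
      rw [MonoidHom.mem_ker, Subgroup.mem_subgroupOf]
      have : φ x = 1 ↔ (x : N) ∈ Ni (i + 1) := QuotientGroup.eq_one_iff _
      rw [this, part1 (i + 1)]
      exact ⟨fun h => ⟨hHiH i x x.2, h⟩, fun h => h.2⟩
    have hrange : φ.range = (Hi i).map (QuotientGroup.mk' (Ni (i + 1))) := by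
      rw [hφ, MonoidHom.range_comp, Subgroup.range_subtype]
    refine ⟨((QuotientGroup.quotientMulEquivOfEq hker.symm).trans
      (QuotientGroup.quotientKerEquivRange φ)).trans (MulEquiv.subgroupCongr hrange), ?_⟩
    intro x
    rfl
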